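/- Let T₁, …, Tₙ be contractions on Hilbert spaces ℍ₁, …, ℍₙ with the unit circle 𝕋 contained in the spectrum of each Tᵢ. Set T̃ᵢ = I^{⊗(i−1)} ⊗ Tᵢ ⊗ I^{⊗(n−i)} acting on ℍ₁ ⊗ ⋯ ⊗ ℍₙ. Then for all a₁, …, aₙ ∈ ℂ, ‖a₁T̃₁ + ⋯ + aₙT̃ₙ‖ = |a₁| + ⋯ + |aₙ|; i.e., the map (a₁,…,aₙ) ↦ Σ aᵢT̃ᵢ is an isometric embedding of ℓ¹(n) into B(ℍ₁ ⊗ ⋯ ⊗ ℍₙ). -/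

import Mathlib

set_option maxHeartbeats 1000000

lemma approx_eig {E : Type*} [NormedAddCommGroup E] [NormedSpace ℂ E] [CompleteSpace E]
    (T : E →L[ℂ] E) (hT : ‖T‖ ≤ 1) {μ : ℂ} (hμ : ‖μ‖ = 1) (hsp : μ ∈ spectrum ℂ T)
    {ε : ℝ} (hε : 0 < ε) : ∃ x : E, ‖x‖ = 1 ∧ ‖T x - μ • x‖ < ε := by
  have hE : Nontrivial E := by
    by_contra h
    have : Subsingleton E := not_nontrivial_iff_subsingleton.mp h
    exact (spectrum.mem_iff.mp hsp) (isUnit_of_subsingleton _)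
  set δ : ℝ := ε / 3 with hδ
  have hδ0 : 0 < δ := by positivity
  have hnd : ‖((δ : ℂ) * μ)‖ = δ := by
    rw [norm_mul, hμ, mul_one, Complex.norm_real, Real.norm_eq_abs, abs_of_pos hδ0]
  have hout : ((1 + (δ : ℂ)) * μ) ∉ spectrum ℂ T := by
    intro hmem
    have h2 := spectrum.norm_le_norm_of_mem hmem
    have h1 : ‖(1 + (δ : ℂ)) * μ‖ = 1 + δ := by
      rw [norm_mul, hμ, mul_one,
        show ((1:ℂ) + (δ:ℂ)) = ((1 + δ : ℝ) : ℂ) by push_cast; ring,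
        Complex.norm_real, Real.norm_eq_abs, abs_of_pos (by linarith)]
    rw [h1] at h2
    linarith [le_trans h2 hT]
  obtain ⟨u, hu⟩ := spectrum.notMem_iff.mp hout
  obtain ⟨w, v, hwv, hvw, huw⟩ :
      ∃ w v : E →L[ℂ] E, w * v = 1 ∧ v * w = 1 ∧
        w = (algebraMap ℂ (E →L[ℂ] E)) ((1 + (δ : ℂ)) * μ) - T :=
    ⟨↑u, ↑u⁻¹, u.mul_inv, u.inv_mul, hu⟩
  have hwunit : IsUnit w := ⟨⟨w, v, hwv, hvw⟩, rfl⟩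
  have hdec : (algebraMap ℂ (E →L[ℂ] E)) μ - T
      = w - ((δ : ℂ) * μ) • (1 : E →L[ℂ] E) := by
    rw [huw, Algebra.algebraMap_eq_smul_one, Algebra.algebraMap_eq_smul_one]
    module
  have hinv : (1:ℝ)/δ ≤ ‖v‖ := by
    by_contra h
    push_neg at h
    have hsmall : ‖((δ : ℂ) * μ) • v‖ < 1 := by
      calc ‖((δ : ℂ) * μ) • v‖ ≤ ‖((δ : ℂ) * μ)‖ * ‖v‖ := ContinuousLinearMap.opNorm_smul_le _ _
        _ = δ * ‖v‖ := by rw [hnd]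
        _ < δ * (1/δ) := mul_lt_mul_of_pos_left h hδ0
        _ = 1 := by field_simp
    have hone : IsUnit ((1 : E →L[ℂ] E) - ((δ : ℂ) * μ) • v) :=
      (Units.oneSub _ hsmall).isUnit
    have hprod : (algebraMap ℂ (E →L[ℂ] E)) μ - T
        = w * ((1 : E →L[ℂ] E) - ((δ : ℂ) * μ) • v) := by
      rw [hdec, mul_sub, mul_one, mul_smul_comm, hwv]
    exact (spectrum.mem_iff.mp hsp) (hprod ▸ (hwunit.mul hone))
  have hc : (2/ε : ℝ) < ‖v‖ := by
    refine lt_of_lt_of_le ?_ hinv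
    rw [hδ, one_div, inv_div]
    exact (div_lt_div_iff₀ hε hε).mpr (by nlinarith)
  obtain ⟨y, hy1, hy2⟩ := ContinuousLinearMap.exists_lt_apply_of_lt_opNorm v hc
  set z : E := v y with hz
  have hzpos : (0:ℝ) < ‖z‖ := lt_trans (by positivity) hy2
  have huz : w z = y := by
    rw [hz, ← ContinuousLinearMap.mul_apply, hwv, ContinuousLinearMap.one_apply]
  set x : E := ((‖z‖ : ℂ))⁻¹ • z with hx
  have hxnorm : ‖x‖ = 1 := by
    rw [hx, norm_smul, norm_inv, Complex.norm_real, Real.norm_eq_abs, abs_of_pos hzpos]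
    field_simp
  refine ⟨x, hxnorm, ?_⟩
  have hux : w x = ((‖z‖ : ℂ))⁻¹ • y := by
    rw [hx, map_smul, huz]
  have huxnorm : ‖w x‖ < ε/2 := by
    rw [hux, norm_smul, norm_inv, Complex.norm_real, Real.norm_eq_abs, abs_of_pos hzpos]
    have h1 : ‖z‖⁻¹ < ε/2 := by
      rw [inv_lt_iff_one_lt_mul₀ hzpos]
      calc (1:ℝ) = (ε/2) * (2/ε) := by field_simp
        _ < (ε/2) * ‖z‖ := mul_lt_mul_of_pos_left hy2 (by positivity)
        _ = _ := by ring
    calc ‖z‖⁻¹ * ‖y‖ ≤ ‖z‖⁻¹ * 1 :=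
          mul_le_mul_of_nonneg_left (le_of_lt hy1) (by positivity)
      _ < ε/2 := by rwa [mul_one]
  have hTx : T x - μ • x = ((δ : ℂ) * μ) • x - w x := by
    have h3 : w x = ((1 + (δ : ℂ)) * μ) • x - T x := by
      rw [huw, Algebra.algebraMap_eq_smul_one]
      simp [ContinuousLinearMap.sub_apply, ContinuousLinearMap.smul_apply]
    rw [h3]
    module
  rw [hTx]
  calc ‖((δ : ℂ) * μ) • x - w x‖
      ≤ ‖((δ : ℂ) * μ) • x‖ + ‖w x‖ := norm_sub_le _ _
    _ < δ + ε/2 := by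
        rw [norm_smul, hnd, hxnorm, mul_one]
        linarith
    _ < ε := by rw [hδ]; linarith

/-- Isometric embedding of `ℓ¹(n)` into the bounded operators on a Hilbert-space tensor
product `ℍ₁ ⊗ ⋯ ⊗ ℍₙ`.  The tensor product is axiomatized by a map
`Φ : Πᵢ ℍᵢ → K` with `⟨Φ x, Φ y⟩ = Πᵢ ⟨xᵢ, yᵢ⟩` (elementary tensors), and the operators
`T̃ᵢ = I ⊗ ⋯ ⊗ Tᵢ ⊗ ⋯ ⊗ I` are characterized by being contractions acting on
elementary tensors in the `i`-th factor.  If each `Tᵢ` is a contraction whose spectrum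
contains the unit circle, then `‖Σ aᵢ T̃ᵢ‖ = Σ |aᵢ|`. -/
theorem stmt17 (n : ℕ) (H : Fin n → Type*)
    [∀ i, NormedAddCommGroup (H i)] [∀ i, InnerProductSpace ℂ (H i)]
    [∀ i, CompleteSpace (H i)]
    (K : Type*) [NormedAddCommGroup K] [InnerProductSpace ℂ K] [CompleteSpace K]
    (T : ∀ i, H i →L[ℂ] H i) (hT : ∀ i, ‖T i‖ ≤ 1)
    (hspec : ∀ i, ∀ μ : ℂ, ‖μ‖ = 1 → μ ∈ spectrum ℂ (T i))
    (Φ : (∀ i, H i) → K)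
    (hΦ : ∀ x y : ∀ i, H i, (inner ℂ (Φ x) (Φ y) : ℂ) = ∏ i, (inner ℂ (x i) (y i) : ℂ))
    (Ttil : Fin n → K →L[ℂ] K) (hTtil : ∀ i, ‖Ttil i‖ ≤ 1)
    (hact : ∀ (i : Fin n) (x : ∀ i, H i),
      Ttil i (Φ x) = Φ (Function.update x i (T i (x i))))
    (a : Fin n → ℂ) :
    ‖∑ i, a i • Ttil i‖ = ∑ i, ‖a i‖ := by
  classical
  have hub : ‖∑ i, a i • Ttil i‖ ≤ ∑ i, ‖a i‖ := by
    refine le_trans (norm_sum_le _ _) (Finset.sum_le_sum fun i _ => ?_)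
    calc ‖a i • Ttil i‖ ≤ ‖a i‖ * ‖Ttil i‖ := ContinuousLinearMap.opNorm_smul_le _ _
      _ ≤ ‖a i‖ * 1 := mul_le_mul_of_nonneg_left (hTtil i) (norm_nonneg _)
      _ = ‖a i‖ := mul_one _
  refine le_antisymm hub ?_
  refine le_of_forall_pos_le_add fun ε hε => ?_
  set μ : Fin n → ℂ := fun i => if a i = 0 then 1 else (starRingEnd ℂ) (a i) / (‖a i‖ : ℂ)
    with hμdef
  have hμ1 : ∀ i, ‖μ i‖ = 1 := by
    intro i
    by_cases h : a i = 0
    · simp [hμdef, h]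
    · have hna : (0:ℝ) < ‖a i‖ := norm_pos_iff.mpr h
      simp only [hμdef, h, if_false]
      rw [norm_div, RCLike.norm_conj, Complex.norm_real, Real.norm_eq_abs, abs_norm]
      exact div_self (ne_of_gt hna)
  have hμa : ∀ i, a i * μ i = ((‖a i‖ : ℝ) : ℂ) := by
    intro i
    by_cases h : a i = 0
    · simp [hμdef, h]
    · have hna : ((‖a i‖ : ℝ) : ℂ) ≠ 0 := by
        simpa using norm_pos_iff.mpr h |>.ne'
      simp only [hμdef, h, if_false]
      rw [mul_div_assoc', Complex.mul_conj, Complex.normSq_eq_norm_sq]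
      have h2 : ‖a i‖ ^ 2 / ‖a i‖ = ‖a i‖ := by
        rw [sq, mul_div_assoc, div_self (norm_ne_zero_iff.mpr h), mul_one]
      exact_mod_cast congrArg (Complex.ofReal) h2
  have hε' : (0:ℝ) < ε / (∑ i, ‖a i‖ + 1) := by
    have : (0:ℝ) ≤ ∑ i, ‖a i‖ := Finset.sum_nonneg fun i _ => norm_nonneg _
    positivity
  choose x hx1 hx2 using fun i => approx_eig (T i) (hT i) (hμ1 i) (hspec i (μ i) (hμ1 i)) hε'
  have hxin : ∀ i, (inner ℂ (x i) (x i) : ℂ) = 1 := fun i => by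
    rw [inner_self_eq_norm_sq_to_K, hx1]; norm_num
  have hvv : (inner ℂ (Φ x) (Φ x) : ℂ) = 1 := by
    rw [hΦ]
    exact Finset.prod_eq_one fun i _ => hxin i
  have hvnorm : ‖Φ x‖ = 1 := by
    have h := inner_self_eq_norm_sq_to_K (𝕜 := ℂ) (Φ x)
    rw [hvv] at h
    have h2 : ‖Φ x‖ ^ 2 = 1 := Complex.ofReal_eq_one.mp (by push_cast; exact h.symm)
    rw [← Real.sqrt_sq (norm_nonneg (Φ x)), h2, Real.sqrt_one]
  have hkey : ∀ i, ‖Ttil i (Φ x) - μ i • Φ x‖ = ‖T i (x i) - μ i • x i‖ := by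
    intro i
    set y := T i (x i) with hy
    have e1 : (inner ℂ (Φ (Function.update x i y)) (Φ (Function.update x i y)) : ℂ)
        = inner ℂ y y := by
      rw [hΦ, Finset.prod_eq_single_of_mem i (Finset.mem_univ i)
        (fun j _ hj => by rw [Function.update_of_ne hj, hxin j]),
        Function.update_self]
    have e2 : (inner ℂ (Φ (Function.update x i y)) (Φ x) : ℂ) = inner ℂ y (x i) := by
      rw [hΦ, Finset.prod_eq_single_of_mem i (Finset.mem_univ i)
        (fun j _ hj => by rw [Function.update_of_ne hj, hxin j]),
        Function.update_self]
    have e3 : (inner ℂ (Φ x) (Φ (Function.update x i y)) : ℂ) = inner ℂ (x i) y := by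
      rw [hΦ, Finset.prod_eq_single_of_mem i (Finset.mem_univ i)
        (fun j _ hj => by rw [Function.update_of_ne hj, hxin j]),
        Function.update_self]
    have hinner : (inner ℂ (Ttil i (Φ x) - μ i • Φ x) (Ttil i (Φ x) - μ i • Φ x) : ℂ)
        = inner ℂ (T i (x i) - μ i • x i) (T i (x i) - μ i • x i) := by
      rw [hact i x, ← hy]
      simp only [inner_sub_left, inner_sub_right, inner_smul_left, inner_smul_right]
      rw [e1, e2, e3, hvv, hxin i]
    have h1 := inner_self_eq_norm_sq_to_K (𝕜 := ℂ) (Ttil i (Φ x) - μ i • Φ x)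
    have h2 := inner_self_eq_norm_sq_to_K (𝕜 := ℂ) (T i (x i) - μ i • x i)
    rw [h1, h2] at hinner
    have h3 : ‖Ttil i (Φ x) - μ i • Φ x‖ ^ 2 = ‖T i (x i) - μ i • x i‖ ^ 2 := by
      exact_mod_cast hinner
    rw [← Real.sqrt_sq (norm_nonneg (Ttil i (Φ x) - μ i • Φ x)), h3,
      Real.sqrt_sq (norm_nonneg _)]
  have hsmul : (((∑ i, ‖a i‖ : ℝ)) : ℂ) • Φ x = ∑ i, (a i * μ i) • Φ x := by
    rw [← Finset.sum_smul]
    congr 1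
    push_cast
    exact Finset.sum_congr rfl fun i _ => (hμa i).symm
  have hSv : (∑ i, a i • Ttil i) (Φ x) - (((∑ i, ‖a i‖ : ℝ)) : ℂ) • Φ x
      = ∑ i, a i • (Ttil i (Φ x) - μ i • Φ x) := by
    rw [ContinuousLinearMap.sum_apply, hsmul, ← Finset.sum_sub_distrib]
    refine Finset.sum_congr rfl fun i _ => ?_
    rw [ContinuousLinearMap.smul_apply, smul_sub, smul_smul]
  have hest : ‖(∑ i, a i • Ttil i) (Φ x) - (((∑ i, ‖a i‖ : ℝ)) : ℂ) • Φ x‖ ≤ ε := by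
    rw [hSv]
    refine le_trans (norm_sum_le _ _) ?_
    calc ∑ i, ‖a i • (Ttil i (Φ x) - μ i • Φ x)‖
        ≤ ∑ i, ‖a i‖ * (ε / (∑ i, ‖a i‖ + 1)) := by
          refine Finset.sum_le_sum fun i _ => ?_
          rw [norm_smul, hkey i]
          exact mul_le_mul_of_nonneg_left (le_of_lt (hx2 i)) (norm_nonneg _)
      _ = (∑ i, ‖a i‖) * (ε / (∑ i, ‖a i‖ + 1)) := by rw [← Finset.sum_mul]
      _ ≤ (∑ i, ‖a i‖ + 1) * (ε / (∑ i, ‖a i‖ + 1)) :=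
          mul_le_mul_of_nonneg_right (by linarith) (le_of_lt hε')
      _ = ε := by
          have : (∑ i, ‖a i‖ + 1) ≠ 0 := by
            have : (0:ℝ) ≤ ∑ i, ‖a i‖ := Finset.sum_nonneg fun i _ => norm_nonneg _
            linarith
          field_simp
  have hsum0 : (0:ℝ) ≤ ∑ i, ‖a i‖ := Finset.sum_nonneg fun i _ => norm_nonneg _
  calc ∑ i, ‖a i‖ = ‖(((∑ i, ‖a i‖ : ℝ)) : ℂ) • Φ x‖ := by
        rw [norm_smul, hvnorm, mul_one, Complex.norm_real, Real.norm_eq_abs,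
          abs_of_nonneg hsum0]
    _ = ‖(∑ i, a i • Ttil i) (Φ x)
          - ((∑ i, a i • Ttil i) (Φ x) - (((∑ i, ‖a i‖ : ℝ)) : ℂ) • Φ x)‖ := by
        congr 1
        abel
    _ ≤ ‖(∑ i, a i • Ttil i) (Φ x)‖
          + ‖(∑ i, a i • Ttil i) (Φ x) - (((∑ i, ‖a i‖ : ℝ)) : ℂ) • Φ x‖ := norm_sub_le _ _
    _ ≤ ‖∑ i, a i • Ttil i‖ * ‖Φ x‖ + ε :=
        add_le_add (ContinuousLinearMap.le_opNorm _ _) hest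
    _ = ‖∑ i, a i • Ttil i‖ + ε := by rw [hvnorm, mul_one]
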